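/- Let G be a group, T a nonempty set equipped with a free and transitive right G-action, φ_G : G → G a group homomorphism, and φ_T : T → T a map satisfying φ_T(t·g) = φ_T(t)·φ_G(g) for all t ∈ T and g ∈ G. If the map G → G given by g ↦ g·φ_G(g)⁻¹ is bijective, then φ_T has exactly one fixed point: there exists a unique t ∈ T with φ_T(t) = t. -/
import Mathlib


/-- If `T` is a nonempty set with a free and transitive right action of a group `G`,
`φG : G → G` is a homomorphism and `φT : T → T` is compatible with the action via `φG`,
and `g ↦ g·φG(g)⁻¹` is bijective on `G`, then `φT` has a unique fixed point. -/
theorem stmt1 {G T : Type*} [Group G] [Nonempty T]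
    (act : T → G → T)
    (act_one : ∀ t, act t 1 = t)
    (act_mul : ∀ t g h, act t (g * h) = act (act t g) h)
    (act_free : ∀ t g, act t g = t → g = 1)
    (act_trans : ∀ t t' : T, ∃ g : G, act t g = t')
    (φG : G →* G) (φT : T → T)
    (hcompat : ∀ t g, φT (act t g) = act (φT t) (φG g))
    (hbij : Function.Bijective (fun g : G => g * (φG g)⁻¹)) :
    ∃! t : T, φT t = t := by
  obtain ⟨t0⟩ := ‹Nonempty T›
  obtain ⟨h, hh⟩ := act_trans t0 (φT t0)
  obtain ⟨g, hg⟩ := hbij.2 h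
  simp only at hg
  set t := act t0 g with ht
  have hfix : φT t = t := by
    rw [ht, hcompat, ← hh, ← act_mul]
    congr 1
    rw [← hg]; group
  refine ⟨t, hfix, ?_⟩
  intro t' ht'
  obtain ⟨k, hk⟩ := act_trans t t'
  have h1 : act t (φG k) = t' := by
    rw [← hfix, ← hcompat, hk, ht']
  have h2 : φG k = k := by
    have e : act t' (k⁻¹ * φG k) = t' := by
      conv_lhs => rw [← hk]
      rw [← act_mul, show k * (k⁻¹ * φG k) = φG k by group, h1]
    have := act_free _ _ e
    rw [inv_mul_eq_one] at this
    exact this.symm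
  have hk1 : k = 1 := by
    have : (fun g : G => g * (φG g)⁻¹) k = (fun g : G => g * (φG g)⁻¹) 1 := by
      simp [h2]
    exact hbij.1 this
  rw [← hk, hk1, act_one]
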